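/- Let x_1,…,x_N be independent real random variables with E[x_i] = 0, E[x_i²] = 1, and E[x_i⁴] = k for all i (with k finite). Let v_1,…,v_N ∈ ℝ, let W be a real D×N matrix with columns w_1,…,w_N, and set y = Σ_i v_i x_i², ỹ = Σ_{a=1}^D ((W x)_a)² + b with b = −Σ_i (‖w_i‖² − v_i). Then E[(ỹ − y)²] = (k−1)·Σ_i (‖w_i‖² − v_i)² + 2·Σ_{i≠j} (w_i·w_j)². -/

import Mathlib

open scoped BigOperators
open MeasureTheory ProbabilityTheory Matrix
open scoped ENNReal

set_option linter.unusedSectionVars false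

section AuxQML

variable {Ω : Type*} [MeasurableSpace Ω] {μ : Measure Ω} [IsProbabilityMeasure μ]

private lemma qml_int_pow4 {f : Ω → ℝ} (h : MemLp f 4 μ) :
    Integrable (fun ω => f ω ^ 4) μ := by
  have h2 := h.integrable_norm_rpow (by norm_num) (by norm_num)
  have he : (fun ω => ‖f ω‖ ^ (4:ℝ≥0∞).toReal) = fun ω => f ω ^ 4 := by
    funext ω
    rw [show ((4:ℝ≥0∞).toReal) = ((4:ℕ):ℝ) by norm_num, Real.rpow_natCast,
      Real.norm_eq_abs, ← abs_pow, abs_of_nonneg (by positivity)]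
  rwa [he] at h2

private lemma qml_int_pow2 {f : Ω → ℝ} (hm : Measurable f) (h : MemLp f 4 μ) :
    Integrable (fun ω => f ω ^ 2) μ := by
  refine Integrable.mono' ((integrable_const 1).add (qml_int_pow4 h))
    ((hm.pow_const 2).aestronglyMeasurable) ?_
  filter_upwards with ω
  have : |f ω ^ 2| ≤ 1 + f ω ^ 4 := by
    nlinarith [abs_nonneg (f ω ^ 2), sq_abs (f ω ^ 2), sq_nonneg (|f ω ^ 2| - 1), sq_nonneg (f ω)]
  simpa using this

private lemma qml_int_mul2 {f g : Ω → ℝ} (hfm : Measurable f) (hgm : Measurable g)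
    (hf : MemLp f 4 μ) (hg : MemLp g 4 μ) :
    Integrable (fun ω => f ω * g ω) μ := by
  refine Integrable.mono' ((integrable_const 1).add ((qml_int_pow4 hf).add (qml_int_pow4 hg)))
    (hfm.mul hgm).aestronglyMeasurable ?_
  filter_upwards with ω
  have : |f ω * g ω| ≤ 1 + (f ω ^ 4 + g ω ^ 4) := by
    nlinarith [abs_nonneg (f ω * g ω), sq_abs (f ω * g ω), sq_nonneg (|f ω * g ω| - 1),
      sq_nonneg (f ω ^ 2 - g ω ^ 2), sq_nonneg (f ω * g ω)]
  calc ‖f ω * g ω‖ = |f ω * g ω| := Real.norm_eq_abs _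
    _ ≤ _ := this

private lemma qml_int_mul4 {f1 f2 f3 f4 : Ω → ℝ}
    (h1m : Measurable f1) (h2m : Measurable f2) (h3m : Measurable f3) (h4m : Measurable f4)
    (h1 : MemLp f1 4 μ) (h2 : MemLp f2 4 μ) (h3 : MemLp f3 4 μ) (h4 : MemLp f4 4 μ) :
    Integrable (fun ω => f1 ω * f2 ω * (f3 ω * f4 ω)) μ := by
  refine Integrable.mono'
    (((qml_int_pow4 h1).add (qml_int_pow4 h2)).add ((qml_int_pow4 h3).add (qml_int_pow4 h4)))
    (((h1m.mul h2m).mul (h3m.mul h4m)).aestronglyMeasurable) ?_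
  filter_upwards with ω
  have : |f1 ω * f2 ω * (f3 ω * f4 ω)| ≤ f1 ω ^ 4 + f2 ω ^ 4 + (f3 ω ^ 4 + f4 ω ^ 4) := by
    have h1' : |f1 ω * f2 ω * (f3 ω * f4 ω)| = |f1 ω * f2 ω| * |f3 ω * f4 ω| := abs_mul _ _
    nlinarith [abs_nonneg (f1 ω * f2 ω), abs_nonneg (f3 ω * f4 ω), sq_abs (f1 ω * f2 ω),
      sq_abs (f3 ω * f4 ω), sq_nonneg (|f1 ω * f2 ω| - |f3 ω * f4 ω|),
      sq_nonneg (f1 ω ^ 2 - f2 ω ^ 2), sq_nonneg (f3 ω ^ 2 - f4 ω ^ 2)]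
  calc ‖f1 ω * f2 ω * (f3 ω * f4 ω)‖ = |f1 ω * f2 ω * (f3 ω * f4 ω)| := Real.norm_eq_abs _
    _ ≤ _ := this

theorem qml_core (μ : Measure Ω) [IsProbabilityMeasure μ]
    {N : ℕ} (X : Fin N → Ω → ℝ) (hmeas : ∀ i, Measurable (X i))
    (hindep : iIndepFun X μ)
    (hL4 : ∀ i, MemLp (X i) 4 μ)
    (h1 : ∀ i, ∫ ω, X i ω ∂μ = 0)
    (h2 : ∀ i, ∫ ω, (X i ω) ^ 2 ∂μ = 1)
    (k : ℝ) (h4 : ∀ i, ∫ ω, (X i ω) ^ 4 ∂μ = k)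
    (aa : Fin N → Fin N → ℝ) :
    ∫ ω, (∑ i, ∑ j, aa i j * (X i ω * X j ω - if i = j then (1:ℝ) else 0)) ^ 2 ∂μ
      = (k - 1) * ∑ i, (aa i i) ^ 2
        + ∑ i, ∑ j ∈ Finset.univ.erase i, (aa i j ^ 2 + aa i j * aa j i) := by
  classical
  set Y : Fin N → Fin N → Ω → ℝ :=
    fun i j ω => X i ω * X j ω - if i = j then 1 else 0 with hYdef
  have icongr : ∀ {f g : Ω → ℝ}, (∀ ω, f ω = g ω) → ∫ ω, f ω ∂μ = ∫ ω, g ω ∂μ :=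
    fun h => integral_congr_ae (Filter.Eventually.of_forall h)
  -- integrability
  have hYm : ∀ i j, Measurable (Y i j) :=
    fun i j => ((hmeas i).mul (hmeas j)).sub measurable_const
  have hYYint : ∀ i j r s, Integrable (fun ω => Y i j ω * Y r s ω) μ := by
    intro i j r s
    have hrw : (fun ω => Y i j ω * Y r s ω) = fun ω =>
        X i ω * X j ω * (X r ω * X s ω)
          - (if r = s then (1:ℝ) else 0) * (X i ω * X j ω)
          - (if i = j then (1:ℝ) else 0) * (X r ω * X s ω)
          + (if i = j then (1:ℝ) else 0) * (if r = s then (1:ℝ) else 0) := by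
      funext ω; simp only [hYdef]; ring
    rw [hrw]
    exact ((((qml_int_mul4 (hmeas i) (hmeas j) (hmeas r) (hmeas s) (hL4 i) (hL4 j) (hL4 r)
        (hL4 s)).sub
      ((qml_int_mul2 (hmeas i) (hmeas j) (hL4 i) (hL4 j)).const_mul _)).sub
      ((qml_int_mul2 (hmeas r) (hmeas s) (hL4 r) (hL4 s)).const_mul _)).add
      (integrable_const _))
  -- pairwise factorization
  have hpair : ∀ (φ ψ : ℝ → ℝ), Measurable φ → Measurable ψ → ∀ i j : Fin N, i ≠ j →
      ∫ ω, φ (X i ω) * ψ (X j ω) ∂μ = (∫ ω, φ (X i ω) ∂μ) * ∫ ω, ψ (X j ω) ∂μ := by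
    intro φ ψ hφ hψ i j hij
    exact ((hindep.indepFun hij).comp hφ hψ).integral_fun_mul_eq_mul_integral
      (hφ.comp (hmeas i)).aestronglyMeasurable (hψ.comp (hmeas j)).aestronglyMeasurable
  have hpeel : ∀ (φ : ℝ → ℝ → ℝ), Measurable (Function.uncurry φ) →
      ∀ p q t : Fin N, p ≠ t → q ≠ t →
      ∫ ω, φ (X p ω) (X q ω) * X t ω ∂μ = 0 := by
    intro φ hφ p q t hpt hqt
    have hI : IndepFun (fun ω => φ (X p ω) (X q ω)) (X t) μ :=
      (hindep.indepFun_prodMk hmeas p q t hpt hqt).comp hφ measurable_id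
    rw [hI.integral_fun_mul_eq_mul_integral
      ((hφ.comp ((hmeas p).prodMk (hmeas q))).aestronglyMeasurable)
      (hmeas t).aestronglyMeasurable, h1 t, mul_zero]
  -- single centered expectations
  have hEY : ∀ p q : Fin N, ∫ ω, Y p q ω ∂μ = 0 := by
    intro p q
    by_cases hpq : p = q
    · subst hpq
      have : ∫ ω, Y p p ω ∂μ = (∫ ω, X p ω ^ 2 ∂μ) - ∫ ω, (1:ℝ) ∂μ := by
        rw [← integral_sub (qml_int_pow2 (hmeas p) (hL4 p)) (integrable_const 1)]
        exact icongr fun ω => by simp [hYdef]; ring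
      rw [this, h2 p]; simp
    · have : ∫ ω, Y p q ω ∂μ = ∫ ω, X p ω * X q ω ∂μ := icongr fun ω => by
        simp [hYdef, hpq]
      rw [this]
      simpa [h1 p, h1 q] using hpair (fun u => u) (fun u => u) measurable_id measurable_id p q hpq
  -- disjoint case
  have hdisj : ∀ i j r s : Fin N, i ≠ r → i ≠ s → j ≠ r → j ≠ s →
      ∫ ω, Y i j ω * Y r s ω ∂μ = 0 := by
    intro i j r s hir his hjr hjs
    have h0 := hindep.indepFun_prodMk_prodMk hmeas i j r s hir his hjr hjs
    have hI : IndepFun (Y i j) (Y r s) μ :=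
      h0.comp (φ := fun p : ℝ × ℝ => p.1 * p.2 - if i = j then (1:ℝ) else 0)
        (ψ := fun p : ℝ × ℝ => p.1 * p.2 - if r = s then (1:ℝ) else 0)
        ((measurable_fst.mul measurable_snd).sub measurable_const)
        ((measurable_fst.mul measurable_snd).sub measurable_const)
    rw [hI.integral_fun_mul_eq_mul_integral (hYm i j).aestronglyMeasurable (hYm r s).aestronglyMeasurable,
      hEY i j, zero_mul]
  -- more helpers
  have hsqsq : ∀ p q : Fin N, p ≠ q → ∫ ω, (X p ω * X p ω) * (X q ω * X q ω) ∂μ = 1 := by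
    intro p q hpq
    have e2 : ∀ t : Fin N, ∫ ω, X t ω * X t ω ∂μ = 1 := fun t => by
      rw [icongr (show ∀ ω, X t ω * X t ω = X t ω ^ 2 from fun ω => (pow_two _).symm)]
      exact h2 t
    simpa [e2 p, e2 q] using hpair (fun u => u * u) (fun u => u * u)
      (measurable_id.mul measurable_id) (measurable_id.mul measurable_id) p q hpq
  have hc : ∀ p t : Fin N, p ≠ t → ∫ ω, ((X p ω * X p ω - 1) * X p ω) * X t ω ∂μ = 0 := by
    intro p t hpt
    simpa [h1 t] using hpair (fun u => (u * u - 1) * u) (fun u => u)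
      (((measurable_id.mul measurable_id).sub measurable_const).mul measurable_id)
      measurable_id p t hpt
  -- the central moment computation
  have hII : ∀ i j r s : Fin N, ∫ ω, Y i j ω * Y r s ω ∂μ =
      (if i = j then (if r = s then (if i = r then k - 1 else 0) else 0)
       else if r = s then 0
       else (if i = r ∧ j = s then (1:ℝ) else 0) + (if i = s ∧ j = r then 1 else 0)) := by
    intro i j r s
    by_cases hij : i = j
    · subst hij
      by_cases hrs : r = s
      · subst hrs
        by_cases hir : i = r
        · subst hir
          simp only [if_pos rfl]
          rw [icongr (show ∀ ω, Y i i ω * Y i i ω = X i ω ^ 4 - 2 * X i ω ^ 2 + 1 from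
              fun ω => by simp [hYdef]; ring),
            integral_add (show Integrable (fun ω => X i ω ^ 4 - 2 * X i ω ^ 2) μ from
              (qml_int_pow4 (hL4 i)).sub ((qml_int_pow2 (hmeas i) (hL4 i)).const_mul 2))
              (integrable_const 1),
            integral_sub (qml_int_pow4 (hL4 i))
              (show Integrable (fun ω => 2 * X i ω ^ 2) μ from
                (qml_int_pow2 (hmeas i) (hL4 i)).const_mul 2),
            integral_const_mul, h4 i, h2 i]
          simp
          ring
        · rw [hdisj i i r r hir hir hir hir]
          simp [hir]
      · simp only [if_pos rfl, if_neg hrs]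
        by_cases hir : i = r
        · subst hir
          rw [icongr (show ∀ ω, Y i i ω * Y i s ω = ((X i ω * X i ω - 1) * X i ω) * X s ω from
            fun ω => by simp [hYdef, hrs]; ring)]
          exact hc i s hrs
        · by_cases his : i = s
          · subst his
            rw [icongr (show ∀ ω, Y i i ω * Y r i ω = ((X i ω * X i ω - 1) * X i ω) * X r ω from
              fun ω => by simp [hYdef, hrs]; ring)]
            exact hc i r hir
          · exact hdisj i i r s hir his hir his
    · by_cases hrs : r = s
      · subst hrs
        simp only [if_neg hij, if_pos rfl]
        by_cases hri : r = i
        · subst hri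
          rw [icongr (show ∀ ω, Y r j ω * Y r r ω = ((X r ω * X r ω - 1) * X r ω) * X j ω from
            fun ω => by simp [hYdef, hij]; ring)]
          exact hc r j hij
        · by_cases hrj : r = j
          · subst hrj
            rw [icongr (show ∀ ω, Y i r ω * Y r r ω = ((X r ω * X r ω - 1) * X r ω) * X i ω from
              fun ω => by simp [hYdef, hij]; ring)]
            exact hc r i (fun h => hij h.symm)
          · exact hdisj i j r r (fun h => hri h.symm) (fun h => hri h.symm)
              (fun h => hrj h.symm) (fun h => hrj h.symm)
      · simp only [if_neg hij, if_neg hrs]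
        by_cases hir : i = r
        · subst hir
          by_cases hjs : j = s
          · subst hjs
            rw [icongr (show ∀ ω, Y i j ω * Y i j ω = (X i ω * X i ω) * (X j ω * X j ω) from
              fun ω => by simp [hYdef, hij]; ring), hsqsq i j hij]
            simp [hij]
          · have h0 : ∫ ω, ((X i ω * X i ω) * X s ω) * X j ω ∂μ = 0 :=
              hpeel (fun u w => (u * u) * w)
                ((measurable_fst.mul measurable_fst).mul measurable_snd) i s j hij
                (fun h => hjs h.symm)
            rw [icongr (show ∀ ω, Y i j ω * Y i s ω = ((X i ω * X i ω) * X s ω) * X j ω from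
              fun ω => by simp [hYdef, hij, hrs]; ring), h0]
            simp [hjs, hrs]
        · by_cases his : i = s
          · subst his
            by_cases hjr : j = r
            · subst hjr
              rw [icongr (show ∀ ω, Y i j ω * Y j i ω = (X i ω * X i ω) * (X j ω * X j ω) from
                fun ω => by simp [hYdef, hij, hrs]; ring), hsqsq i j hij]
              simp [hij, hir]
            · have h0 : ∫ ω, ((X i ω * X i ω) * X r ω) * X j ω ∂μ = 0 :=
                hpeel (fun u w => (u * u) * w)
                  ((measurable_fst.mul measurable_fst).mul measurable_snd) i r j hij
                  (fun h => hjr h.symm)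
              rw [icongr (show ∀ ω, Y i j ω * Y r i ω = ((X i ω * X i ω) * X r ω) * X j ω from
                fun ω => by simp [hYdef, hij, hrs]; ring), h0]
              simp [hir, hjr]
          · by_cases hjr : j = r
            · subst hjr
              have h0 : ∫ ω, ((X j ω * X j ω) * X s ω) * X i ω ∂μ = 0 :=
                hpeel (fun u w => (u * u) * w)
                  ((measurable_fst.mul measurable_fst).mul measurable_snd) j s i
                  (fun h => hij h.symm) (fun h => his h.symm)
              rw [icongr (show ∀ ω, Y i j ω * Y j s ω = ((X j ω * X j ω) * X s ω) * X i ω from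
                fun ω => by simp [hYdef, hij, hrs]; ring), h0]
              simp [hij, his]
            · by_cases hjs : j = s
              · subst hjs
                have h0 : ∫ ω, ((X j ω * X j ω) * X r ω) * X i ω ∂μ = 0 :=
                  hpeel (fun u w => (u * u) * w)
                    ((measurable_fst.mul measurable_fst).mul measurable_snd) j r i
                    (fun h => hij h.symm) (fun h => hir h.symm)
                rw [icongr (show ∀ ω, Y i j ω * Y r j ω = ((X j ω * X j ω) * X r ω) * X i ω from
                  fun ω => by simp [hYdef, hij, hrs]; ring), h0]
                simp [hir, hij]
              · rw [hdisj i j r s hir his hjr hjs]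
                simp [hir, his, hjr, hjs]
  -- expand the square
  have hsq : ∀ ω : Ω, (∑ i, ∑ j, aa i j * Y i j ω) ^ 2
      = ∑ i, ∑ j, ∑ r, ∑ s, aa i j * aa r s * (Y i j ω * Y r s ω) := by
    intro ω
    rw [sq, Finset.sum_mul_sum]
    refine Finset.sum_congr rfl fun i _ => ?_
    calc (∑ r, (∑ j, aa i j * Y i j ω) * (∑ s, aa r s * Y r s ω))
        = ∑ r, ∑ j, ∑ s, aa i j * aa r s * (Y i j ω * Y r s ω) := by
          refine Finset.sum_congr rfl fun r _ => ?_
          rw [Finset.sum_mul_sum]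
          exact Finset.sum_congr rfl fun j _ => Finset.sum_congr rfl fun s _ => by ring
      _ = ∑ j, ∑ r, ∑ s, aa i j * aa r s * (Y i j ω * Y r s ω) := Finset.sum_comm
  have hint1 : ∀ i j r s : Fin N, Integrable (fun ω => aa i j * aa r s * (Y i j ω * Y r s ω)) μ :=
    fun i j r s => (hYYint i j r s).const_mul _
  have hpush : ∫ ω, (∑ i, ∑ j, aa i j * Y i j ω) ^ 2 ∂μ
      = ∑ i, ∑ j, ∑ r, ∑ s, aa i j * aa r s * ∫ ω, Y i j ω * Y r s ω ∂μ := by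
    rw [icongr hsq,
      integral_finset_sum _ (fun i _ => integrable_finset_sum _ (fun j _ =>
        integrable_finset_sum _ (fun r _ => integrable_finset_sum _ (fun s _ =>
          hint1 i j r s))))]
    refine Finset.sum_congr rfl fun i _ => ?_
    rw [integral_finset_sum _ (fun j _ => integrable_finset_sum _ (fun r _ =>
      integrable_finset_sum _ (fun s _ => hint1 i j r s)))]
    refine Finset.sum_congr rfl fun j _ => ?_
    rw [integral_finset_sum _ (fun r _ => integrable_finset_sum _ (fun s _ => hint1 i j r s))]
    refine Finset.sum_congr rfl fun r _ => ?_
    rw [integral_finset_sum _ (fun s _ => hint1 i j r s)]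
    exact Finset.sum_congr rfl fun s _ => integral_const_mul _ _
  rw [hpush]
  simp only [hII]
  -- evaluate the sums
  have hj : ∀ i : Fin N, (∑ j, ∑ r, ∑ s, aa i j * aa r s *
        (if i = j then (if r = s then (if i = r then k - 1 else 0) else 0)
         else if r = s then 0
         else (if i = r ∧ j = s then (1:ℝ) else 0) + (if i = s ∧ j = r then 1 else 0)))
      = aa i i * aa i i * (k - 1)
        + ∑ j ∈ Finset.univ.erase i, (aa i j ^ 2 + aa i j * aa j i) := by
    intro i
    rw [← Finset.add_sum_erase _ _ (Finset.mem_univ i)]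
    congr 1
    · simp [mul_ite, mul_zero, Finset.sum_ite_eq, Finset.sum_ite_eq']
    · refine Finset.sum_congr rfl fun j hjmem => ?_
      have hij' : ¬ i = j := fun h => (Finset.mem_erase.mp hjmem).1 h.symm
      have hA : ∀ r s : Fin N, (if i = j then (if r = s then (if i = r then k - 1 else 0) else 0)
           else if r = s then (0:ℝ)
           else (if i = r ∧ j = s then (1:ℝ) else 0) + (if i = s ∧ j = r then 1 else 0))
          = (if i = r ∧ j = s then (1:ℝ) else 0) + (if i = s ∧ j = r then 1 else 0) := by
        intro r s
        rw [if_neg hij']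
        by_cases hrs : r = s
        · subst hrs
          have e1 : ¬(i = r ∧ j = r) := fun h => hij' (h.1.trans h.2.symm)
          simp [e1]
        · simp [hrs]
      simp only [hA]
      simp [mul_add, mul_ite, mul_zero, mul_one, Finset.sum_add_distrib, ite_and,
        Finset.sum_ite_eq, Finset.sum_ite_eq']
      ring
  rw [Finset.sum_congr rfl (fun i _ => hj i), Finset.sum_add_distrib]
  congr 1
  rw [Finset.mul_sum]
  exact Finset.sum_congr rfl fun i _ => by ring

end AuxQML

/-- For the quadratic toy model with ground truth `y = ∑ᵢ vᵢ xᵢ²` and model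
`ỹ = ∑ₐ ((Wx)ₐ)² + b` with optimal bias `b = -∑ᵢ (‖wᵢ‖² - vᵢ)`, the expected loss is
`E[(ỹ - y)²] = (k-1) ∑ᵢ (‖wᵢ‖² - vᵢ)² + 2 ∑_{i≠j} (wᵢ·wⱼ)²`. -/
theorem quadratic_model_expected_loss
    {Ω : Type*} [MeasurableSpace Ω] (μ : Measure Ω) [IsProbabilityMeasure μ]
    {N D : ℕ} (X : Fin N → Ω → ℝ) (hmeas : ∀ i, Measurable (X i))
    (hindep : iIndepFun X μ)
    (hL4 : ∀ i, MemLp (X i) 4 μ)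
    (h1 : ∀ i, ∫ ω, X i ω ∂μ = 0)
    (h2 : ∀ i, ∫ ω, (X i ω) ^ 2 ∂μ = 1)
    (k : ℝ) (h4 : ∀ i, ∫ ω, (X i ω) ^ 4 ∂μ = k)
    (v : Fin N → ℝ) (W : Matrix (Fin D) (Fin N) ℝ)
    (b : ℝ) (hb : b = -∑ i, ((∑ a, W a i * W a i) - v i)) :
    ∫ ω, ((∑ a, (∑ i, W a i * X i ω) ^ 2 + b) - ∑ i, v i * (X i ω) ^ 2) ^ 2 ∂μ =
      (k - 1) * ∑ i, ((∑ a, W a i * W a i) - v i) ^ 2 +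
        2 * ∑ i, ∑ j ∈ Finset.univ.erase i, (∑ a, W a i * W a j) ^ 2 := by
  classical
  set aa : Fin N → Fin N → ℝ :=
    fun i j => (∑ a, W a i * W a j) - (if i = j then v i else 0) with haa
  have hpt : ∀ ω : Ω, ((∑ a, (∑ i, W a i * X i ω) ^ 2 + b) - ∑ i, v i * (X i ω) ^ 2)
      = ∑ i, ∑ j, aa i j * (X i ω * X j ω - if i = j then (1:ℝ) else 0) := by
    intro ω
    have expand : ∑ a, (∑ i, W a i * X i ω) ^ 2
        = ∑ i, ∑ j, (∑ a, W a i * W a j) * (X i ω * X j ω) := by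
      calc ∑ a, (∑ i, W a i * X i ω) ^ 2
          = ∑ a, ∑ i, ∑ j, (W a i * W a j) * (X i ω * X j ω) := by
            refine Finset.sum_congr rfl fun a _ => ?_
            rw [sq, Finset.sum_mul_sum]
            exact Finset.sum_congr rfl fun i _ => Finset.sum_congr rfl fun j _ => by ring
        _ = ∑ i, ∑ a, ∑ j, (W a i * W a j) * (X i ω * X j ω) := Finset.sum_comm
        _ = ∑ i, ∑ j, (∑ a, W a i * W a j) * (X i ω * X j ω) := by
            refine Finset.sum_congr rfl fun i _ => ?_
            rw [Finset.sum_comm]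
            exact Finset.sum_congr rfl fun j _ => (Finset.sum_mul _ _ _).symm
    have inner : ∀ i, (∑ j, aa i j * (X i ω * X j ω - if i = j then (1:ℝ) else 0))
        = (∑ j, (∑ a, W a i * W a j) * (X i ω * X j ω)) - v i * (X i ω * X i ω)
          - ((∑ a, W a i * W a i) - v i) := by
      intro i
      have hterm : ∀ j, aa i j * (X i ω * X j ω - if i = j then (1:ℝ) else 0)
          = (∑ a, W a i * W a j) * (X i ω * X j ω)
            - (if i = j then v i * (X i ω * X j ω) else 0)
            - (if i = j then (∑ a, W a i * W a j) - v i else 0) := by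
        intro j
        by_cases hij : i = j
        · subst hij; simp [haa]; ring
        · simp [haa, hij]
      rw [Finset.sum_congr rfl fun j _ => hterm j, Finset.sum_sub_distrib,
        Finset.sum_sub_distrib, Finset.sum_ite_eq, Finset.sum_ite_eq]
      simp
    rw [Finset.sum_congr rfl fun i _ => inner i, Finset.sum_sub_distrib,
      Finset.sum_sub_distrib, ← expand, hb]
    have hv : ∀ i : Fin N, v i * (X i ω * X i ω) = v i * X i ω ^ 2 := fun i => by ring
    rw [Finset.sum_congr rfl fun i _ => hv i]
    ring
  calc ∫ ω, ((∑ a, (∑ i, W a i * X i ω) ^ 2 + b) - ∑ i, v i * (X i ω) ^ 2) ^ 2 ∂μ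
      = ∫ ω, (∑ i, ∑ j, aa i j * (X i ω * X j ω - if i = j then (1:ℝ) else 0)) ^ 2 ∂μ :=
        integral_congr_ae (Filter.Eventually.of_forall fun ω => by
          simp only []
          rw [hpt ω])
    _ = (k - 1) * ∑ i, (aa i i) ^ 2
        + ∑ i, ∑ j ∈ Finset.univ.erase i, (aa i j ^ 2 + aa i j * aa j i) :=
        qml_core μ X hmeas hindep hL4 h1 h2 k h4 aa
    _ = (k - 1) * ∑ i, ((∑ a, W a i * W a i) - v i) ^ 2 +
        2 * ∑ i, ∑ j ∈ Finset.univ.erase i, (∑ a, W a i * W a j) ^ 2 := by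
        congr 1
        · congr 1
          exact Finset.sum_congr rfl fun i _ => by simp [haa]
        · rw [Finset.mul_sum]
          refine Finset.sum_congr rfl fun i _ => ?_
          rw [Finset.mul_sum]
          refine Finset.sum_congr rfl fun j hjm => ?_
          have hij : ¬ i = j := fun h => (Finset.mem_erase.mp hjm).1 h.symm
          have hji : ¬ j = i := fun h => (Finset.mem_erase.mp hjm).1 h
          have hsymm : aa j i = aa i j := by
            simp [haa, hij, hji]
            exact Finset.sum_congr rfl fun a _ => mul_comm _ _
          rw [hsymm]
          simp [haa, hij]
          ring
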